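/- In the universal enveloping algebra U(g) of a simple Lie algebra g with basis {x_a}, Killing form η, and Ω_g = η^{ab} x_a ⊗ x_b ∈ U(g)⊗U(g), the following identity holds: [[x_i⊗1, Ω_g], Ω_g] = (1/2)(α_i^{jc} α_j^{ab} + α_i^{jb} α_j^{ac}) (x_a ⊗ {x_b,x_c} − {x_b,x_c} ⊗ x_a), where {x,y} = (xy+yx)/2. -/

import Mathlib

open TensorProduct Finset Matrix

/-- The commutator `[x,y] = xy - yx` in an associative algebra. -/
def comm' {A : Type*} [Ring A] (x y : A) : A := x * y - y * x

/-- The symmetrized product `{x,y} = (xy + yx)/2`. -/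
noncomputable def acomm' {A : Type*} [Ring A] [Algebra ℂ A] (x y : A) : A :=
  (2⁻¹ : ℂ) • (x * y + y * x)

section helpers

set_option linter.unusedSectionVars false

theorem rot3' {ι M : Type*} [Fintype ι] [AddCommMonoid M] (F : ι → ι → ι → M) :
    ∑ a, ∑ b, ∑ c, F a b c = ∑ b, ∑ c, ∑ a, F a b c := by
  rw [Finset.sum_comm]
  exact Finset.sum_congr rfl fun b _ => Finset.sum_comm

theorem cyc3' {ι M : Type*} [Fintype ι] [AddCommMonoid M] (F : ι → ι → ι → M) :
    ∑ a, ∑ b, ∑ c, F a b c = ∑ a, ∑ b, ∑ c, F b c a :=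
  (rot3' (fun a b c => F b c a)).symm

section
variable {ι M : Type*} [Fintype ι] [AddCommGroup M] [Module ℂ M]

theorem collect1' (f : ι → ι → ℂ) (m : ι → M) :
    ∑ a, ∑ k, f a k • m k = ∑ k, (∑ a, f a k) • m k := by
  rw [Finset.sum_comm]
  exact Finset.sum_congr rfl fun k _ => (Finset.sum_smul).symm

theorem collect2' (f : ι → ι → ι → ℂ) (m : ι → ι → M) :
    ∑ a, ∑ b, ∑ c, f a b c • m b c = ∑ b, ∑ c, (∑ a, f a b c) • m b c := by
  rw [Finset.sum_comm]
  exact Finset.sum_congr rfl fun b _ => collect1' _ _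

theorem collect3a' (g : ι → ι → ι → ι → ℂ) (m : ι → ι → ι → M) :
    ∑ b, ∑ c, ∑ d, ∑ k, g b c d k • m c d k
      = ∑ c, ∑ d, ∑ k, (∑ b, g b c d k) • m c d k := by
  rw [Finset.sum_comm]
  exact Finset.sum_congr rfl fun c _ => collect2' _ _

theorem sym_sum' (f f' : ι → ι → ℂ) (g : ι → ι → M)
    (hg : ∀ b e, g b e = g e b)
    (h : ∀ b e, f b e + f e b = f' b e + f' e b) :
    ∑ b, ∑ e, f b e • g b e = ∑ b, ∑ e, f' b e • g b e := by
  have key : ∀ (f : ι → ι → ℂ), (2:ℂ) • (∑ b, ∑ e, f b e • g b e)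
      = ∑ b, ∑ e, (f b e + f e b) • g b e := by
    intro f
    have h1 : ∑ b, ∑ e, f e b • g b e = ∑ b, ∑ e, f b e • g b e := by
      rw [Finset.sum_comm]
      exact Finset.sum_congr rfl fun b _ => Finset.sum_congr rfl fun e _ => by rw [hg]
    calc (2:ℂ) • ∑ b, ∑ e, f b e • g b e
        = (∑ b, ∑ e, f b e • g b e) + ∑ b, ∑ e, f e b • g b e := by
          rw [h1, two_smul]
      _ = ∑ b, ∑ e, (f b e • g b e + f e b • g b e) := by
          rw [← Finset.sum_add_distrib]
          exact Finset.sum_congr rfl fun b _ => (Finset.sum_add_distrib).symm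
      _ = ∑ b, ∑ e, (f b e + f e b) • g b e :=
          Finset.sum_congr rfl fun b _ => Finset.sum_congr rfl fun e _ =>
            (add_smul _ _ _).symm
  have h2 : (2:ℂ) • (∑ b, ∑ e, f b e • g b e) = (2:ℂ) • (∑ b, ∑ e, f' b e • g b e) := by
    rw [key f, key f']
    exact Finset.sum_congr rfl fun b _ => Finset.sum_congr rfl fun e _ => by rw [h]
  exact smul_right_injective M (two_ne_zero) h2

end

section
variable {A : Type*} [Ring A] [Algebra ℂ A]

theorem acomm'_comm (a b : A) : acomm' a b = acomm' b a := by
  simp [acomm', add_comm]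

theorem comm'_sum_left {κ : Type*} (s : Finset κ) (f : κ → A) (y : A) :
    comm' (∑ i ∈ s, f i) y = ∑ i ∈ s, comm' (f i) y := by
  simp [comm', Finset.sum_mul, Finset.mul_sum, Finset.sum_sub_distrib]

theorem comm'_sum_right {κ : Type*} (s : Finset κ) (y : A) (f : κ → A) :
    comm' y (∑ i ∈ s, f i) = ∑ i ∈ s, comm' y (f i) := by
  simp [comm', Finset.sum_mul, Finset.mul_sum, Finset.sum_sub_distrib]

theorem comm'_smul_left (r : ℂ) (a b : A) : comm' (r • a) b = r • comm' a b := by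
  simp [comm', smul_sub, smul_mul_assoc, mul_smul_comm]

theorem comm'_smul_right (r : ℂ) (a b : A) : comm' a (r • b) = r • comm' a b := by
  simp [comm', smul_sub, smul_mul_assoc, mul_smul_comm]

theorem comm'_tmul_one (u a b : A) :
    comm' (u ⊗ₜ[ℂ] (1 : A)) (a ⊗ₜ[ℂ] b) = (comm' u a) ⊗ₜ[ℂ] b := by
  simp only [comm', Algebra.TensorProduct.tmul_mul_tmul, one_mul, mul_one,
    TensorProduct.sub_tmul]

theorem comm'_tmul_tmul (a b c d : A) :
    comm' (a ⊗ₜ[ℂ] b) (c ⊗ₜ[ℂ] d)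
      = (comm' a c) ⊗ₜ[ℂ] (acomm' b d) + (acomm' a c) ⊗ₜ[ℂ] (comm' b d) := by
  simp only [comm', acomm', Algebra.TensorProduct.tmul_mul_tmul]
  rw [TensorProduct.tmul_smul, ← TensorProduct.smul_tmul']
  simp only [TensorProduct.sub_tmul, TensorProduct.tmul_sub, TensorProduct.tmul_add,
    TensorProduct.add_tmul, smul_add, smul_sub]
  module

end

theorem jac_coords' {L : Type*} [LieRing L] [LieAlgebra ℂ L]
    {ι : Type*} [Fintype ι] [DecidableEq ι]
    (x : Module.Basis ι ℂ L) (α : ι → ι → ι → ℂ)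
    (hα : ∀ a b, ⁅x a, x b⁆ = ∑ c, α a b c • x c) :
    ∀ i d p q, ∑ e, α i d e * α e p q
      = (∑ e, α d p e * α i e q) - ∑ e, α i p e * α d e q := by
  have sum_lie' : ∀ (f : ι → L) (y : L), ⁅∑ c, f c, y⁆ = ∑ c, ⁅f c, y⁆ := fun f y =>
    map_sum (AddMonoidHom.mk' (fun z => ⁅z, y⁆) (fun a b => add_lie a b y)) f univ
  have lie_sum' : ∀ (y : L) (f : ι → L), ⁅y, ∑ c, f c⁆ = ∑ c, ⁅y, f c⁆ := fun y f =>
    map_sum (AddMonoidHom.mk' (fun z => ⁅y, z⁆) (fun a b => lie_add y a b)) f univ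
  intro i d p q
  have hid : ⁅(⁅x i, x d⁆), x p⁆ = ⁅x i, ⁅x d, x p⁆⁆ - ⁅x d, ⁅x i, x p⁆⁆ := by
    rw [eq_sub_iff_add_eq, lie_lie]
    abel
  have h1 : ⁅(⁅x i, x d⁆), x p⁆ = ∑ e, ∑ c, (α i d e * α e p c) • x c := by
    rw [hα i d, sum_lie']
    refine Finset.sum_congr rfl fun e _ => ?_
    rw [smul_lie, hα e p, Finset.smul_sum]
    exact Finset.sum_congr rfl fun c _ => (smul_smul _ _ _)
  have h2 : ⁅x i, ⁅x d, x p⁆⁆ = ∑ e, ∑ c, (α d p e * α i e c) • x c := by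
    rw [hα d p, lie_sum']
    refine Finset.sum_congr rfl fun e _ => ?_
    rw [lie_smul, hα i e, Finset.smul_sum]
    exact Finset.sum_congr rfl fun c _ => (smul_smul _ _ _)
  have h3 : ⁅x d, ⁅x i, x p⁆⁆ = ∑ e, ∑ c, (α i p e * α d e c) • x c := by
    rw [hα i p, lie_sum']
    refine Finset.sum_congr rfl fun e _ => ?_
    rw [lie_smul, hα d e, Finset.smul_sum]
    exact Finset.sum_congr rfl fun c _ => (smul_smul _ _ _)
  rw [h1, h2, h3] at hid
  have := congrArg (fun y => x.repr y q) hid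
  simpa [Finsupp.single_apply] using this

theorem etainv_symm' {ι : Type*} [Fintype ι] [DecidableEq ι]
    (η ηinv : ι → ι → ℂ)
    (hsym : ∀ a b, η a b = η b a)
    (hηinv : ∀ a c, (∑ b, η a b * ηinv b c) = if a = c then 1 else 0) :
    ∀ a b, ηinv a b = ηinv b a := by
  intro a b
  set M : Matrix ι ι ℂ := Matrix.of η with hM
  set N : Matrix ι ι ℂ := Matrix.of ηinv with hN
  have hMN : M * N = 1 := by
    ext p q
    simp [Matrix.mul_apply, hM, hN, hηinv p q, Matrix.one_apply]
  have hMT : Mᵀ = M := by ext p q; simp [hM, hsym p q]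
  have hNT : Nᵀ = N := by
    have h1 : Nᵀ * M = 1 := by
      have := congrArg Matrix.transpose hMN
      rw [Matrix.transpose_mul, hMT] at this
      simpa using this
    calc Nᵀ = Nᵀ * (M * N) := by rw [hMN, Matrix.mul_one]
    _ = (Nᵀ * M) * N := by rw [Matrix.mul_assoc]
    _ = N := by rw [h1, Matrix.one_mul]
  have := congrFun (congrFun hNT b) a
  simpa [hN, Matrix.transpose_apply] using this

theorem eta_symm' {ι : Type*} [Fintype ι]
    (α : ι → ι → ι → ℂ) (η : ι → ι → ℂ)
    (hη : ∀ a b, η a b = ∑ c, ∑ d, α a c d * α b d c) :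
    ∀ a b, η a b = η b a := by
  intro a b
  rw [hη a b, hη b a, Finset.sum_comm]
  exact Finset.sum_congr rfl fun c _ => Finset.sum_congr rfl fun d _ => by ring

theorem eta_inv_skew' {L : Type*} [LieRing L] [LieAlgebra ℂ L]
    {ι : Type*} [Fintype ι] [DecidableEq ι]
    (x : Module.Basis ι ℂ L) (α : ι → ι → ι → ℂ)
    (hα : ∀ a b, ⁅x a, x b⁆ = ∑ c, α a b c • x c)
    (η : ι → ι → ℂ)
    (hη : ∀ a b, η a b = ∑ c, ∑ d, α a c d * α b d c) :
    ∀ i m n, (∑ e, α i n e * η e m) + (∑ e, α i m e * η e n) = 0 := by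
  have jac := jac_coords' x α hα
  intro i m n
  have key : ∀ m n, ∑ e, α i n e * η e m
      = (∑ p, ∑ q, ∑ e, α n p e * α i e q * α m q p)
        - ∑ p, ∑ q, ∑ e, α i p e * α n e q * α m q p := by
    intro m n
    calc ∑ e, α i n e * η e m
        = ∑ e, ∑ p, ∑ q, α i n e * α e p q * α m q p := by
          refine Finset.sum_congr rfl fun e _ => ?_
          rw [hη e m, Finset.mul_sum]
          refine Finset.sum_congr rfl fun p _ => ?_
          rw [Finset.mul_sum]
          exact Finset.sum_congr rfl fun q _ => by ring
      _ = ∑ p, ∑ q, ∑ e, α i n e * α e p q * α m q p := rot3' _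
      _ = ∑ p, ∑ q, (∑ e, α i n e * α e p q) * α m q p := by
          refine Finset.sum_congr rfl fun p _ => Finset.sum_congr rfl fun q _ => ?_
          rw [Finset.sum_mul]
      _ = ∑ p, ∑ q, ((∑ e, α n p e * α i e q) - ∑ e, α i p e * α n e q) * α m q p := by
          refine Finset.sum_congr rfl fun p _ => Finset.sum_congr rfl fun q _ => ?_
          rw [jac i n p q]
      _ = (∑ p, ∑ q, ∑ e, α n p e * α i e q * α m q p)
            - ∑ p, ∑ q, ∑ e, α i p e * α n e q * α m q p := by
          simp [sub_mul, Finset.sum_mul, Finset.sum_sub_distrib]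
  rw [key m n, key n m]
  have hA1B2 : (∑ p, ∑ q, ∑ e, α n p e * α i e q * α m q p)
      = ∑ p, ∑ q, ∑ e, α i p e * α m e q * α n q p := by
    rw [cyc3' (fun p q e => α n p e * α i e q * α m q p)]
    exact Finset.sum_congr rfl fun p _ => Finset.sum_congr rfl fun q _ =>
      Finset.sum_congr rfl fun e _ => by ring
  have hB1A2 : (∑ p, ∑ q, ∑ e, α m p e * α i e q * α n q p)
      = ∑ p, ∑ q, ∑ e, α i p e * α n e q * α m q p := by
    rw [cyc3' (fun p q e => α m p e * α i e q * α n q p)]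
    exact Finset.sum_congr rfl fun p _ => Finset.sum_congr rfl fun q _ =>
      Finset.sum_congr rfl fun e _ => by ring
  rw [hA1B2, hB1A2]
  ring

theorem alphaup_skew' {L : Type*} [LieRing L] [LieAlgebra ℂ L]
    {ι : Type*} [Fintype ι] [DecidableEq ι]
    (x : Module.Basis ι ℂ L) (α : ι → ι → ι → ℂ)
    (hα : ∀ a b, ⁅x a, x b⁆ = ∑ c, α a b c • x c)
    (η : ι → ι → ℂ)
    (hη : ∀ a b, η a b = ∑ c, ∑ d, α a c d * α b d c)
    (ηinv : ι → ι → ℂ)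
    (hηinv : ∀ a c, (∑ b, η a b * ηinv b c) = if a = c then 1 else 0)
    (αup : ι → ι → ι → ℂ)
    (hαup : ∀ a b c, αup a b c = ∑ d, ηinv b d * α a d c) :
    ∀ i b c, αup i b c = -αup i c b := by
  have hsym := eta_symm' α η hη
  have hisym := etainv_symm' η ηinv hsym hηinv
  have hskew := eta_inv_skew' x α hα η hη
  set Lo : ι → ι → ι → ℂ := fun i d e => ∑ f, α i d f * η f e with hLo
  have hLoskew : ∀ i m n, Lo i n m = -Lo i m n := by
    intro i m n
    have h := hskew i m n
    simp only [hLo]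
    linear_combination h
  have hstep : ∀ i d c, α i d c = ∑ e, Lo i d e * ηinv e c := by
    intro i d c
    simp only [hLo]
    refine Eq.symm ?_
    calc (∑ e, (∑ f, α i d f * η f e) * ηinv e c)
        = ∑ e, ∑ f, α i d f * (η f e * ηinv e c) := by
          refine Finset.sum_congr rfl fun e _ => ?_
          rw [Finset.sum_mul]
          exact Finset.sum_congr rfl fun f _ => by ring
      _ = ∑ f, ∑ e, α i d f * (η f e * ηinv e c) := Finset.sum_comm
      _ = ∑ f, α i d f * ∑ e, η f e * ηinv e c := by
          refine Finset.sum_congr rfl fun f _ => ?_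
          rw [Finset.mul_sum]
      _ = α i d c := by
          simp only [hηinv]
          simp [mul_ite]
  intro i b c
  calc αup i b c = ∑ d, ∑ e, ηinv b d * (Lo i d e * ηinv e c) := by
        rw [hαup]
        refine Finset.sum_congr rfl fun d _ => ?_
        rw [hstep i d c, Finset.mul_sum]
    _ = ∑ d, ∑ e, -(ηinv b d * (Lo i e d * ηinv e c)) := by
        refine Finset.sum_congr rfl fun d _ => Finset.sum_congr rfl fun e _ => ?_
        rw [hLoskew i e d]
        ring
    _ = -∑ e, ∑ d, ηinv b d * (Lo i e d * ηinv e c) := by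
        rw [Finset.sum_comm]
        simp [Finset.sum_neg_distrib]
    _ = -αup i c b := by
        rw [hαup]
        congr 1
        refine Finset.sum_congr rfl fun e _ => ?_
        rw [hstep i e b, Finset.mul_sum]
        refine Finset.sum_congr rfl fun d _ => ?_
        rw [hisym b d, hisym e c]
        ring

end helpers

theorem double_commutator_with_casimir_tensor
    {L : Type*} [LieRing L] [LieAlgebra ℂ L]
    [FiniteDimensional ℂ L] [LieAlgebra.IsSimple ℂ L]
    {ι : Type*} [Fintype ι] [DecidableEq ι]
    (x : Module.Basis ι ℂ L) (α : ι → ι → ι → ℂ)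
    (hα : ∀ a b, ⁅x a, x b⁆ = ∑ c, α a b c • x c)
    (η : ι → ι → ℂ)
    (hη : ∀ a b, η a b = ∑ c, ∑ d, α a c d * α b d c)
    (ηinv : ι → ι → ℂ)
    (hηinv : ∀ a c, (∑ b, η a b * ηinv b c) = if a = c then 1 else 0)
    (αup : ι → ι → ι → ℂ)
    (hαup : ∀ a b c, αup a b c = ∑ d, ηinv b d * α a d c)
    (Ω : UniversalEnvelopingAlgebra ℂ L ⊗[ℂ] UniversalEnvelopingAlgebra ℂ L)
    (hΩ : Ω = ∑ a, ∑ b, ηinv a b •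
      ((UniversalEnvelopingAlgebra.ι ℂ (x a)) ⊗ₜ[ℂ] (UniversalEnvelopingAlgebra.ι ℂ (x b)))) :
    ∀ i, comm' (comm' ((UniversalEnvelopingAlgebra.ι ℂ (x i)) ⊗ₜ[ℂ]
          (1 : UniversalEnvelopingAlgebra ℂ L)) Ω) Ω
      = (2⁻¹ : ℂ) • ∑ j, ∑ a, ∑ b, ∑ c,
          (αup i j c * αup j a b + αup i j b * αup j a c) •
          ((UniversalEnvelopingAlgebra.ι ℂ (x a)) ⊗ₜ[ℂ]
              (acomm' (UniversalEnvelopingAlgebra.ι ℂ (x b))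
                (UniversalEnvelopingAlgebra.ι ℂ (x c)))
            - (acomm' (UniversalEnvelopingAlgebra.ι ℂ (x b))
                (UniversalEnvelopingAlgebra.ι ℂ (x c))) ⊗ₜ[ℂ]
              (UniversalEnvelopingAlgebra.ι ℂ (x a))) := by
  intro i
  have hsym := eta_symm' α η hη
  have hisym := etainv_symm' η ηinv hsym hηinv
  have hskewup := alphaup_skew' x α hα η hη ηinv hηinv αup hαup
  set X : ι → UniversalEnvelopingAlgebra ℂ L := fun a => UniversalEnvelopingAlgebra.ι ℂ (x a)
    with hX
  have hX' : ∀ a, UniversalEnvelopingAlgebra.ι ℂ (x a) = X a := fun a => by rw [hX]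
  set S : ι → ι → UniversalEnvelopingAlgebra ℂ L := fun b c => acomm' (X b) (X c) with hS
  have hS' : ∀ b c, acomm' (X b) (X c) = S b c := fun b c => by rw [hS]
  have hSsym : ∀ b c, S b c = S c b := fun b c => by rw [← hS', ← hS', acomm'_comm]
  simp only [hX'] at hΩ ⊢
  simp only [hS']
  -- bracket of generators
  have hXc : ∀ a b, comm' (X a) (X b) = ∑ c, α a b c • X c := by
    intro a b
    have h1 : comm' (X a) (X b) = ⁅X a, X b⁆ := (Ring.lie_def _ _).symm
    rw [h1, hX]
    letI : LieRing (UniversalEnvelopingAlgebra ℂ L) := LieRing.ofAssociativeRing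
    rw [← LieHom.map_lie (UniversalEnvelopingAlgebra.ι ℂ) (x a) (x b), hα a b]
    have : (UniversalEnvelopingAlgebra.ι ℂ (∑ c, α a b c • x c) : UniversalEnvelopingAlgebra ℂ L)
        = (UniversalEnvelopingAlgebra.ι ℂ).toLinearMap (∑ c, α a b c • x c) := rfl
    rw [this, map_sum]
    exact Finset.sum_congr rfl fun c _ => by
      rw [LinearMap.map_smul]
      simp only [LieHom.coe_toLinearMap, hX']
  have hY : comm' (X i ⊗ₜ[ℂ] (1 : UniversalEnvelopingAlgebra ℂ L)) Ω
      = ∑ b, ∑ c, αup i b c • ((X c) ⊗ₜ[ℂ] (X b)) := by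
    rw [hΩ]
    calc comm' (X i ⊗ₜ[ℂ] (1 : UniversalEnvelopingAlgebra ℂ L))
          (∑ a, ∑ b, ηinv a b • (X a ⊗ₜ[ℂ] X b))
        = ∑ a, ∑ b, ηinv a b • comm' (X i ⊗ₜ[ℂ] 1) (X a ⊗ₜ[ℂ] X b) := by
          rw [comm'_sum_right]
          exact Finset.sum_congr rfl fun a _ => by
            rw [comm'_sum_right]
            exact Finset.sum_congr rfl fun b _ => comm'_smul_right _ _ _
      _ = ∑ a, ∑ b, ηinv a b • ((∑ c, α i a c • X c) ⊗ₜ[ℂ] X b) := by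
          refine Finset.sum_congr rfl fun a _ => Finset.sum_congr rfl fun b _ => ?_
          rw [comm'_tmul_one, hXc]
      _ = ∑ a, ∑ b, ∑ c, (ηinv a b * α i a c) • (X c ⊗ₜ[ℂ] X b) := by
          refine Finset.sum_congr rfl fun a _ => Finset.sum_congr rfl fun b _ => ?_
          rw [TensorProduct.sum_tmul, Finset.smul_sum]
          refine Finset.sum_congr rfl fun c _ => ?_
          rw [← TensorProduct.smul_tmul', smul_smul]
      _ = ∑ b, ∑ c, (∑ a, ηinv a b * α i a c) • (X c ⊗ₜ[ℂ] X b) := collect2' _ _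
      _ = ∑ b, ∑ c, αup i b c • (X c ⊗ₜ[ℂ] X b) := by
          refine Finset.sum_congr rfl fun b _ => Finset.sum_congr rfl fun c _ => ?_
          congr 1
          rw [hαup]
          exact Finset.sum_congr rfl fun a _ => by rw [hisym]
  have hL : comm' (∑ b, ∑ c, αup i b c • (X c ⊗ₜ[ℂ] X b)) Ω
      = (∑ b, ∑ c, ∑ d, ∑ e, ∑ k,
          (αup i b c * ηinv d e * α c d k) • (X k ⊗ₜ[ℂ] S b e))
        + ∑ b, ∑ c, ∑ d, ∑ e, ∑ k,
          (αup i b c * ηinv d e * α b e k) • (S c d ⊗ₜ[ℂ] X k) := by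
    calc comm' (∑ b, ∑ c, αup i b c • (X c ⊗ₜ[ℂ] X b)) Ω
        = ∑ b, ∑ c, αup i b c • comm' (X c ⊗ₜ[ℂ] X b) Ω := by
          rw [comm'_sum_left]
          exact Finset.sum_congr rfl fun b _ => by
            rw [comm'_sum_left]
            exact Finset.sum_congr rfl fun c _ => comm'_smul_left _ _ _
      _ = ∑ b, ∑ c, αup i b c •
            (∑ d, ∑ e, ηinv d e • comm' (X c ⊗ₜ[ℂ] X b) (X d ⊗ₜ[ℂ] X e)) := by
          refine Finset.sum_congr rfl fun b _ => Finset.sum_congr rfl fun c _ => ?_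
          congr 1
          rw [hΩ, comm'_sum_right]
          exact Finset.sum_congr rfl fun d _ => by
            rw [comm'_sum_right]
            exact Finset.sum_congr rfl fun e _ => comm'_smul_right _ _ _
      _ = ∑ b, ∑ c, ∑ d, ∑ e, (αup i b c * ηinv d e) •
            ((∑ k, α c d k • X k) ⊗ₜ[ℂ] S b e + S c d ⊗ₜ[ℂ] (∑ k, α b e k • X k)) := by
          refine Finset.sum_congr rfl fun b _ => Finset.sum_congr rfl fun c _ => ?_
          rw [Finset.smul_sum]
          refine Finset.sum_congr rfl fun d _ => ?_
          rw [Finset.smul_sum]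
          refine Finset.sum_congr rfl fun e _ => ?_
          rw [smul_smul]
          congr 1
          rw [comm'_tmul_tmul, hXc, hXc, hS', hS']
      _ = ∑ b, ∑ c, ∑ d, ∑ e,
            ((∑ k, (αup i b c * ηinv d e * α c d k) • (X k ⊗ₜ[ℂ] S b e))
              + ∑ k, (αup i b c * ηinv d e * α b e k) • (S c d ⊗ₜ[ℂ] X k)) := by
          refine Finset.sum_congr rfl fun b _ => Finset.sum_congr rfl fun c _ =>
            Finset.sum_congr rfl fun d _ => Finset.sum_congr rfl fun e _ => ?_
          rw [smul_add, TensorProduct.sum_tmul, TensorProduct.tmul_sum,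
            Finset.smul_sum, Finset.smul_sum]
          congr 1
          · exact Finset.sum_congr rfl fun k _ => by
              rw [← TensorProduct.smul_tmul', smul_smul, mul_assoc]
          · exact Finset.sum_congr rfl fun k _ => by
              rw [TensorProduct.tmul_smul, smul_smul, mul_assoc]
      _ = (∑ b, ∑ c, ∑ d, ∑ e, ∑ k,
            (αup i b c * ηinv d e * α c d k) • (X k ⊗ₜ[ℂ] S b e))
          + ∑ b, ∑ c, ∑ d, ∑ e, ∑ k,
            (αup i b c * ηinv d e * α b e k) • (S c d ⊗ₜ[ℂ] X k) := by
          simp only [Finset.sum_add_distrib]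
  -- collect part 1
  have hP1 : (∑ b, ∑ c, ∑ d, ∑ e, ∑ k,
        (αup i b c * ηinv d e * α c d k) • (X k ⊗ₜ[ℂ] S b e))
      = ∑ k, ∑ b, ∑ e,
          (∑ c, ∑ d, αup i b c * ηinv d e * α c d k) • (X k ⊗ₜ[ℂ] S b e) := by
    have inner : ∀ b, (∑ c, ∑ d, ∑ e, ∑ k,
          (αup i b c * ηinv d e * α c d k) • (X k ⊗ₜ[ℂ] S b e))
        = ∑ e, ∑ k, (∑ c, ∑ d, αup i b c * ηinv d e * α c d k) • (X k ⊗ₜ[ℂ] S b e) := by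
      intro b
      calc (∑ c, ∑ d, ∑ e, ∑ k, (αup i b c * ηinv d e * α c d k) • (X k ⊗ₜ[ℂ] S b e))
          = ∑ c, ∑ e, ∑ k, (∑ d, αup i b c * ηinv d e * α c d k) • (X k ⊗ₜ[ℂ] S b e) :=
            Finset.sum_congr rfl fun c _ =>
              collect2' (fun d e k => αup i b c * ηinv d e * α c d k)
                (fun e k => X k ⊗ₜ[ℂ] S b e)
        _ = ∑ e, ∑ k, (∑ c, ∑ d, αup i b c * ηinv d e * α c d k) • (X k ⊗ₜ[ℂ] S b e) :=
            collect2' (fun c e k => ∑ d, αup i b c * ηinv d e * α c d k)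
              (fun e k => X k ⊗ₜ[ℂ] S b e)
    calc (∑ b, ∑ c, ∑ d, ∑ e, ∑ k,
          (αup i b c * ηinv d e * α c d k) • (X k ⊗ₜ[ℂ] S b e))
        = ∑ b, ∑ e, ∑ k,
            (∑ c, ∑ d, αup i b c * ηinv d e * α c d k) • (X k ⊗ₜ[ℂ] S b e) :=
          Finset.sum_congr rfl fun b _ => inner b
      _ = ∑ k, ∑ b, ∑ e,
            (∑ c, ∑ d, αup i b c * ηinv d e * α c d k) • (X k ⊗ₜ[ℂ] S b e) :=
          (rot3' (fun k b e =>
            (∑ c, ∑ d, αup i b c * ηinv d e * α c d k) • (X k ⊗ₜ[ℂ] S b e))).symm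
  -- collect part 2
  have hP2 : (∑ b, ∑ c, ∑ d, ∑ e, ∑ k,
        (αup i b c * ηinv d e * α b e k) • (S c d ⊗ₜ[ℂ] X k))
      = ∑ k, ∑ c, ∑ d,
          (∑ b, ∑ e, αup i b c * ηinv d e * α b e k) • (S c d ⊗ₜ[ℂ] X k) := by
    have inner : ∀ b, (∑ c, ∑ d, ∑ e, ∑ k,
          (αup i b c * ηinv d e * α b e k) • (S c d ⊗ₜ[ℂ] X k))
        = ∑ c, ∑ d, ∑ k, (∑ e, αup i b c * ηinv d e * α b e k) • (S c d ⊗ₜ[ℂ] X k) := by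
      intro b
      refine Finset.sum_congr rfl fun c _ => Finset.sum_congr rfl fun d _ => ?_
      exact collect1' (fun e k => αup i b c * ηinv d e * α b e k) (fun k => S c d ⊗ₜ[ℂ] X k)
    calc (∑ b, ∑ c, ∑ d, ∑ e, ∑ k,
          (αup i b c * ηinv d e * α b e k) • (S c d ⊗ₜ[ℂ] X k))
        = ∑ b, ∑ c, ∑ d, ∑ k,
            (∑ e, αup i b c * ηinv d e * α b e k) • (S c d ⊗ₜ[ℂ] X k) :=
          Finset.sum_congr rfl fun b _ => inner b
      _ = ∑ c, ∑ d, ∑ k,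
            (∑ b, ∑ e, αup i b c * ηinv d e * α b e k) • (S c d ⊗ₜ[ℂ] X k) :=
          collect3a' (fun b c d k => ∑ e, αup i b c * ηinv d e * α b e k)
            (fun c d k => S c d ⊗ₜ[ℂ] X k)
      _ = ∑ k, ∑ c, ∑ d,
            (∑ b, ∑ e, αup i b c * ηinv d e * α b e k) • (S c d ⊗ₜ[ℂ] X k) :=
          (rot3' (fun k c d =>
            (∑ b, ∑ e, αup i b c * ηinv d e * α b e k) • (S c d ⊗ₜ[ℂ] X k))).symm
  -- RHS normal form
  set R : ι → ι → ι → ℂ :=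
    fun a b c => ∑ j, 2⁻¹ * (αup i j c * αup j a b + αup i j b * αup j a c) with hR
  have hRHS : ((2⁻¹ : ℂ) • ∑ j, ∑ a, ∑ b, ∑ c,
        (αup i j c * αup j a b + αup i j b * αup j a c) •
          (X a ⊗ₜ[ℂ] S b c - S b c ⊗ₜ[ℂ] X a))
      = (∑ a, ∑ b, ∑ c, R a b c • (X a ⊗ₜ[ℂ] S b c))
        + ∑ a, ∑ b, ∑ c, (- R a b c) • (S b c ⊗ₜ[ℂ] X a) := by
    calc ((2⁻¹ : ℂ) • ∑ j, ∑ a, ∑ b, ∑ c,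
          (αup i j c * αup j a b + αup i j b * αup j a c) •
            (X a ⊗ₜ[ℂ] S b c - S b c ⊗ₜ[ℂ] X a))
        = ∑ j, ∑ a, ∑ b, ∑ c,
            (2⁻¹ * (αup i j c * αup j a b + αup i j b * αup j a c)) •
              (X a ⊗ₜ[ℂ] S b c - S b c ⊗ₜ[ℂ] X a) := by
          rw [Finset.smul_sum]
          refine Finset.sum_congr rfl fun j _ => ?_
          rw [Finset.smul_sum]
          refine Finset.sum_congr rfl fun a _ => ?_
          rw [Finset.smul_sum]
          refine Finset.sum_congr rfl fun b _ => ?_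
          rw [Finset.smul_sum]
          exact Finset.sum_congr rfl fun c _ => smul_smul _ _ _
      _ = ∑ a, ∑ b, ∑ c, R a b c • (X a ⊗ₜ[ℂ] S b c - S b c ⊗ₜ[ℂ] X a) :=
          collect3a' (fun j a b c =>
              2⁻¹ * (αup i j c * αup j a b + αup i j b * αup j a c))
            (fun a b c => X a ⊗ₜ[ℂ] S b c - S b c ⊗ₜ[ℂ] X a)
      _ = (∑ a, ∑ b, ∑ c, R a b c • (X a ⊗ₜ[ℂ] S b c))
            + ∑ a, ∑ b, ∑ c, (- R a b c) • (S b c ⊗ₜ[ℂ] X a) := by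
          rw [← Finset.sum_add_distrib]
          refine Finset.sum_congr rfl fun a _ => ?_
          rw [← Finset.sum_add_distrib]
          refine Finset.sum_congr rfl fun b _ => ?_
          rw [← Finset.sum_add_distrib]
          refine Finset.sum_congr rfl fun c _ => ?_
          rw [smul_sub, neg_smul, sub_eq_add_neg]
  -- matching of the two parts
  have e1 : (∑ k, ∑ b, ∑ e,
        (∑ c, ∑ d, αup i b c * ηinv d e * α c d k) • (X k ⊗ₜ[ℂ] S b e))
      = ∑ k, ∑ b, ∑ e, R k b e • (X k ⊗ₜ[ℂ] S b e) := by
    refine Finset.sum_congr rfl fun k _ => ?_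
    refine sym_sum' _ _ (fun b e => X k ⊗ₜ[ℂ] S b e)
      (fun b e => congrArg (fun z => X k ⊗ₜ[ℂ] z) (hSsym b e)) ?_
    intro b e
    beta_reduce
    have hf : ∀ b e, (∑ c, ∑ d, αup i b c * ηinv d e * α c d k)
        = ∑ c, αup i c b * αup c k e := by
      intro b e
      have h1 : (∑ c, ∑ d, αup i b c * ηinv d e * α c d k)
          = ∑ c, αup i b c * αup c e k := by
        refine Finset.sum_congr rfl fun c _ => ?_
        rw [hαup c e k, Finset.mul_sum]
        exact Finset.sum_congr rfl fun d _ => by rw [hisym d e]; ring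
      rw [h1]
      refine Finset.sum_congr rfl fun c _ => ?_
      rw [hskewup i b c, hskewup c e k]
      ring
    rw [hf b e, hf e b, hR]
    beta_reduce
    rw [← Finset.sum_add_distrib, ← Finset.sum_add_distrib]
    exact Finset.sum_congr rfl fun j _ => by ring
  have e2 : (∑ k, ∑ c, ∑ d,
        (∑ b, ∑ e, αup i b c * ηinv d e * α b e k) • (S c d ⊗ₜ[ℂ] X k))
      = ∑ k, ∑ c, ∑ d, (- R k c d) • (S c d ⊗ₜ[ℂ] X k) := by
    refine Finset.sum_congr rfl fun k _ => ?_
    refine sym_sum' _ _ (fun c d => S c d ⊗ₜ[ℂ] X k)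
      (fun c d => congrArg (fun z => z ⊗ₜ[ℂ] X k) (hSsym c d)) ?_
    intro c d
    beta_reduce
    have hf : ∀ c d, (∑ b, ∑ e, αup i b c * ηinv d e * α b e k)
        = ∑ b, -(αup i b c * αup b k d) := by
      intro c d
      have h1 : (∑ b, ∑ e, αup i b c * ηinv d e * α b e k)
          = ∑ b, αup i b c * αup b d k := by
        refine Finset.sum_congr rfl fun b _ => ?_
        rw [hαup b d k, Finset.mul_sum]
        exact Finset.sum_congr rfl fun e _ => by ring
      rw [h1]
      refine Finset.sum_congr rfl fun b _ => ?_
      rw [hskewup b d k]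
      ring
    rw [hf c d, hf d c, hR]
    beta_reduce
    rw [← Finset.sum_neg_distrib, ← Finset.sum_neg_distrib,
      ← Finset.sum_add_distrib, ← Finset.sum_add_distrib]
    exact Finset.sum_congr rfl fun j _ => by ring
  -- final assembly
  rw [hY, hL, hP1, hP2, e1, e2, hRHS]
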